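/- Assume G' has no negative cycle. Let T be an SPT of G and T' an SPT of G', both rooted at s. Let (u₁, u₂) be an edge of T with (u₁, u₂) ≠ e₀ and δ(u₁) = δ(u₂), and let u be a vertex such that u₂ lies on the tree path π_{s,u} from s to u in T, the subpath π₂ = π_{s,u}[u₂, u] does not traverse e₀, and π₂ is also the tree path from u₂ to u in T'. Then dist_{G'}(u) = dist_{G'}(u₁) + ω(u₁, u₂) + length_G(π₂); consequently, the concatenation of the tree path from s to u₁ in T' with the edge (u₁, u₂) and the path π₂ is a shortest path from s to u in G'. -/
import Mathlib


namespace DynSPT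

variable {V : Type*}

/-- The list of consecutive edges of a path given as a list of vertices. -/
def edgeList (l : List V) : List (V × V) := l.zip l.tail

/-- The length of a path with respect to the weight function `ω`. -/
def len (ω : V → V → ℝ) (l : List V) : ℝ :=
  ((edgeList l).map fun p => ω p.1 p.2).sum

/-- `l` is a path in the directed graph with edge relation `E`. -/
def IsWalk (E : V → V → Prop) (l : List V) : Prop := l ≠ [] ∧ l.Chain' E

/-- `l` is a path from `u` to `v` in the directed graph with edge relation `E`. -/
def IsWalkFrom (E : V → V → Prop) (l : List V) (u v : V) : Prop :=
  IsWalk E l ∧ l.head? = some u ∧ l.getLast? = some v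

/-- The path `l` traverses the edge `e`. -/
def Traverses (l : List V) (e : V × V) : Prop := e ∈ edgeList l

/-- `l` is a cycle: a path with at least one edge whose first and last vertices agree. -/
def IsCycle (E : V → V → Prop) (l : List V) : Prop :=
  ∃ v, IsWalkFrom E l v v ∧ 2 ≤ l.length

/-- The weighted directed graph `(E, ω)` has a negative cycle. -/
def HasNegCycle (E : V → V → Prop) (ω : V → V → ℝ) : Prop :=
  ∃ l, IsCycle E l ∧ len ω l < 0

/-- The weighted directed graph `(E, ω)` has a zero-length cycle. -/
def HasZeroCycle (E : V → V → Prop) (ω : V → V → ℝ) : Prop :=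
  ∃ l, IsCycle E l ∧ len ω l = 0

/-- The distance from `s` to `v`: the infimum of the lengths of paths from `s` to `v`. -/
noncomputable def dist (E : V → V → Prop) (ω : V → V → ℝ) (s v : V) : ℝ :=
  sInf {L : ℝ | ∃ l, IsWalkFrom E l s v ∧ len ω l = L}

/-- A spanning tree of the directed graph `E` rooted at `s`, recorded by the parent
function together with, for every vertex `v`, the tree path from `s` to `v`. -/
structure RootedTree (E : V → V → Prop) (s : V) where
  parent : V → V
  path : V → List V
  path_root : path s = [s]
  parent_edge : ∀ v, v ≠ s → E (parent v) v
  path_eq : ∀ v, v ≠ s → path v = path (parent v) ++ [v]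
  path_isWalkFrom : ∀ v, IsWalkFrom E (path v) s v

/-- `(a, b)` is an edge of the rooted tree `T`. -/
def RootedTree.IsEdge {E : V → V → Prop} {s : V} (T : RootedTree E s) (a b : V) : Prop :=
  b ≠ s ∧ T.parent b = a

/-- `T` is a shortest-path tree for the weight function `ω`:
every tree path from the root is a shortest path. -/
def IsSPT {E : V → V → Prop} {s : V} (ω : V → V → ℝ) (T : RootedTree E s) : Prop :=
  ∀ v, len ω (T.path v) = dist E ω s v


lemma edgeList_cons_cons (a b : V) (l : List V) :
    edgeList (a :: b :: l) = (a, b) :: edgeList (b :: l) := rfl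

lemma edgeList_append (A B : List V) (m : V) (h : A.getLast? = some m) :
    edgeList (A ++ B) = edgeList A ++ edgeList (m :: B) := by
  induction A with
  | nil => simp at h
  | cons a A ih =>
    cases A with
    | nil =>
      simp only [List.getLast?_singleton, Option.some.injEq] at h
      subst h
      simp [edgeList]
    | cons b A' =>
      have h' : (b :: A').getLast? = some m := by
        rwa [List.getLast?_cons_cons] at h
      have : (a :: b :: A') ++ B = a :: ((b :: A') ++ B) := rfl
      rw [this, List.cons_append, edgeList_cons_cons, edgeList_cons_cons,
        ← List.cons_append]
      rw [List.cons_append] at ih ⊢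
      rw [ih h']
      rfl

lemma len_append (ω : V → V → ℝ) (A B : List V) (m : V) (h : A.getLast? = some m) :
    len ω (A ++ B) = len ω A + len ω (m :: B) := by
  unfold len
  rw [edgeList_append A B m h, List.map_append, List.sum_append]

lemma len_eq_of_notrav {x₀ y₀ : V} {ω ω' : V → V → ℝ}
    (hω' : ∀ a b, (a, b) ≠ (x₀, y₀) → ω' a b = ω a b)
    (l : List V) (h : ¬ Traverses l (x₀, y₀)) : len ω' l = len ω l := by
  unfold len
  congr 1
  apply List.map_congr_left
  intro p hp
  exact hω' p.1 p.2 (by rintro hpe; exact h (by simpa [Traverses, ← hpe] using hp))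

theorem statement_8
    {V : Type*} [Fintype V] (E : V → V → Prop) (ω ω' : V → V → ℝ) (s x₀ y₀ : V)
    (hE₀ : E x₀ y₀)
    (hreach : ∀ v, ∃ l, IsWalkFrom E l s v)
    (hω' : ∀ a b, (a, b) ≠ (x₀, y₀) → ω' a b = ω a b)
    (hG : ¬ HasNegCycle E ω)
    (hG' : ¬ HasNegCycle E ω')
    (T T' : RootedTree E s) (hT : IsSPT ω T) (hT' : IsSPT ω' T')
    (u₁ u₂ u : V) (l₁ l₂ : List V)
    (hedge : T.IsEdge u₁ u₂) (hne : (u₁, u₂) ≠ (x₀, y₀))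
    (hδ : dist E ω' s u₁ - dist E ω s u₁ = dist E ω' s u₂ - dist E ω s u₂)
    (hdecomp : T.path u = l₁ ++ u₂ :: l₂)
    (hnotrav : ¬ Traverses (u₂ :: l₂) (x₀, y₀))
    (hseg : T'.path u = T'.path u₂ ++ l₂) :
    dist E ω' s u = dist E ω' s u₁ + ω u₁ u₂ + len ω (u₂ :: l₂) ∧
      IsWalkFrom E (T'.path u₁ ++ u₂ :: l₂) s u ∧
      len ω' (T'.path u₁ ++ u₂ :: l₂) = dist E ω' s u := by
  obtain ⟨hu₂s, hpar⟩ := hedge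
  have hEedge : E u₁ u₂ := hpar ▸ T.parent_edge u₂ hu₂s
  -- basic facts about tree paths
  have hlast : ∀ v, (T'.path v).getLast? = some v := fun v => (T'.path_isWalkFrom v).2.2
  have hlastT : ∀ v, (T.path v).getLast? = some v := fun v => (T.path_isWalkFrom v).2.2
  -- dist ω u₂ = dist ω u₁ + ω u₁ u₂
  have hpath₂ : T.path u₂ = T.path u₁ ++ [u₂] := by
    rw [T.path_eq u₂ hu₂s, hpar]
  have hlen₂ : len ω (T.path u₂) = len ω (T.path u₁) + ω u₁ u₂ := by
    rw [hpath₂, len_append ω _ _ u₁ (hlastT u₁)]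
    simp [len, edgeList]
  have hdist₂ : dist E ω s u₂ = dist E ω s u₁ + ω u₁ u₂ := by
    rw [← hT u₂, ← hT u₁, hlen₂]
  -- u₂ :: l₂ is a walk from u₂ to u
  have hwalk_u : IsWalkFrom E (T.path u) s u := T.path_isWalkFrom u
  have hchain₂ : (u₂ :: l₂).Chain' E := by
    refine hwalk_u.1.2.suffix ?_
    rw [hdecomp]
    exact List.suffix_append l₁ (u₂ :: l₂)
  have hlast₂ : (u₂ :: l₂).getLast? = some u := by
    have := hwalk_u.2.2
    rw [hdecomp, List.getLast?_append] at this
    simpa using this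
  -- last vertex of T'.path u₂ is u₂ : distances in G'
  have hlenseg : len ω' (T'.path u) = len ω' (T'.path u₂) + len ω' (u₂ :: l₂) := by
    rw [hseg, len_append ω' _ _ u₂ (hlast u₂)]
  have hω'eq : len ω' (u₂ :: l₂) = len ω (u₂ :: l₂) := len_eq_of_notrav hω' _ hnotrav
  have hdist'u : dist E ω' s u = dist E ω' s u₂ + len ω (u₂ :: l₂) := by
    rw [← hT' u, ← hT' u₂, hlenseg, hω'eq]
  have hdist'₂ : dist E ω' s u₂ = dist E ω' s u₁ + ω u₁ u₂ := by
    have := hδ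
    rw [hdist₂] at this
    linarith
  have hmain : dist E ω' s u = dist E ω' s u₁ + ω u₁ u₂ + len ω (u₂ :: l₂) := by
    rw [hdist'u, hdist'₂]
  refine ⟨hmain, ?_, ?_⟩
  · -- walk
    obtain ⟨⟨hne₁, hch₁⟩, hhd₁, hlt₁⟩ := T'.path_isWalkFrom u₁
    refine ⟨⟨by simp [hne₁], ?_⟩, ?_, ?_⟩
    · refine hch₁.append hchain₂ ?_
      intro x hx y hy
      rw [hlast u₁] at hx
      simp at hx hy
      exact hx ▸ hy ▸ hEedge
    · rw [List.head?_append, hhd₁]; rfl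
    · rw [List.getLast?_append, hlast₂]; rfl
  · rw [len_append ω' _ _ u₁ (hlast u₁)]
    have : len ω' (u₁ :: u₂ :: l₂) = ω' u₁ u₂ + len ω' (u₂ :: l₂) := by
      simp [len, edgeList_cons_cons]
    rw [this, hω'eq, hω' u₁ u₂ hne, hT' u₁, hmain]
    ring

end DynSPT
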